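/- Consider the finite-horizon peak-pricing value recursion with zero setup cost: V_{T+1}(x, y) = P·y and V_t(x, y) = inf_{u ≥ 0} { a_t·u + Σ_i p_{t,i} ( h_t(x − u + q_{t,i}) + V_{t+1}(x − u + q_{t,i}, max(y, u)) ) }, where P ≥ 0, a_t ≥ 0, each h_t is convex and nonnegative, and the weights p_{t,i} ≥ 0 sum to 1. Then for every t ∈ {1,…,T+1}, V_t is real-valued and jointly convex on ℝ × ℝ≥0 (as a function of (x, y)). -/

import Mathlib

open Finset in
/-- The one-stage objective of the peak-pricing refrigeration problem with zero setup
cost: ordering cost `a·u` plus the expected penalty-plus-cost-to-go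
`Σ_i p_i (h (x − u + q_i) + W (x − u + q_i, max y u))`. -/
noncomputable def peakLinearStageCost {N : ℕ} (a : ℝ) (q p : Fin N → ℝ)
    (h : ℝ → ℝ) (W : ℝ → ℝ → ℝ) (x y u : ℝ) : ℝ :=
  a * u + ∑ i, p i * (h (x - u + q i) + W (x - u + q i) (max y u))

lemma peakStage_nonneg {N : ℕ} {a : ℝ} {q p : Fin N → ℝ} {h : ℝ → ℝ} {W : ℝ → ℝ → ℝ}
    (ha : 0 ≤ a) (hp : ∀ i, 0 ≤ p i) (hh : ∀ x, 0 ≤ h x)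
    (hW : ∀ x y, 0 ≤ y → 0 ≤ W x y) {x y u : ℝ} (hy : 0 ≤ y) (hu : 0 ≤ u) :
    0 ≤ peakLinearStageCost a q p h W x y u := by
  unfold peakLinearStageCost
  refine add_nonneg (mul_nonneg ha hu) (Finset.sum_nonneg fun i _ => ?_)
  exact mul_nonneg (hp i) (add_nonneg (hh _) (hW _ _ (le_max_of_le_left hy)))

lemma peakStage_mono {N : ℕ} {a : ℝ} {q p : Fin N → ℝ} {h : ℝ → ℝ} {W : ℝ → ℝ → ℝ}
    (hp : ∀ i, 0 ≤ p i)
    (hWmono : ∀ x y1 y2, 0 ≤ y1 → y1 ≤ y2 → W x y1 ≤ W x y2)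
    {x y1 y2 u : ℝ} (hy1 : 0 ≤ y1) (h12 : y1 ≤ y2) (hu : 0 ≤ u) :
    peakLinearStageCost a q p h W x y1 u ≤ peakLinearStageCost a q p h W x y2 u := by
  unfold peakLinearStageCost
  refine add_le_add_right (Finset.sum_le_sum fun i _ => ?_) _
  refine mul_le_mul_of_nonneg_left (add_le_add_right ?_ _) (hp i)
  exact hWmono _ _ _ (le_max_of_le_left hy1) (max_le_max h12 le_rfl)

lemma peakStage_combo {N : ℕ} {a : ℝ} {q p : Fin N → ℝ} {h : ℝ → ℝ} {W : ℝ → ℝ → ℝ}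
    (hp : ∀ i, 0 ≤ p i)
    (hh : ConvexOn ℝ Set.univ h)
    (hW : ConvexOn ℝ {z : ℝ × ℝ | 0 ≤ z.2} (fun z : ℝ × ℝ => W z.1 z.2))
    (hWmono : ∀ x y1 y2, 0 ≤ y1 → y1 ≤ y2 → W x y1 ≤ W x y2)
    {x1 x2 y1 y2 u1 u2 c d : ℝ}
    (hy1 : 0 ≤ y1) (hy2 : 0 ≤ y2) (hu1 : 0 ≤ u1) (hu2 : 0 ≤ u2)
    (hc : 0 ≤ c) (hd : 0 ≤ d) (hcd : c + d = 1) :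
    peakLinearStageCost a q p h W (c*x1+d*x2) (c*y1+d*y2) (c*u1+d*u2)
      ≤ c * peakLinearStageCost a q p h W x1 y1 u1
        + d * peakLinearStageCost a q p h W x2 y2 u2 := by
  have key : ∀ i : Fin N,
      p i * (h ((c*x1+d*x2) - (c*u1+d*u2) + q i)
        + W ((c*x1+d*x2) - (c*u1+d*u2) + q i) (max (c*y1+d*y2) (c*u1+d*u2)))
      ≤ p i * (c * (h (x1 - u1 + q i) + W (x1 - u1 + q i) (max y1 u1))
             + d * (h (x2 - u2 + q i) + W (x2 - u2 + q i) (max y2 u2))) := by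
    intro i
    have hX : (c*x1+d*x2) - (c*u1+d*u2) + q i
        = c * (x1 - u1 + q i) + d * (x2 - u2 + q i) := by
      linear_combination (-q i) * hcd
    have hM0 : (0:ℝ) ≤ max (c*y1+d*y2) (c*u1+d*u2) :=
      le_max_of_le_left (add_nonneg (mul_nonneg hc hy1) (mul_nonneg hd hy2))
    have hM : max (c*y1+d*y2) (c*u1+d*u2) ≤ c * max y1 u1 + d * max y2 u2 := by
      refine max_le (add_le_add ?_ ?_) (add_le_add ?_ ?_)
      · exact mul_le_mul_of_nonneg_left (le_max_left _ _) hc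
      · exact mul_le_mul_of_nonneg_left (le_max_left _ _) hd
      · exact mul_le_mul_of_nonneg_left (le_max_right _ _) hc
      · exact mul_le_mul_of_nonneg_left (le_max_right _ _) hd
    have hhle : h ((c*x1+d*x2) - (c*u1+d*u2) + q i)
        ≤ c * h (x1 - u1 + q i) + d * h (x2 - u2 + q i) := by
      rw [hX]
      have := hh.2 (Set.mem_univ (x1 - u1 + q i)) (Set.mem_univ (x2 - u2 + q i)) hc hd hcd
      simpa [smul_eq_mul] using this
    have hWle : W ((c*x1+d*x2) - (c*u1+d*u2) + q i) (max (c*y1+d*y2) (c*u1+d*u2))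
        ≤ c * W (x1 - u1 + q i) (max y1 u1) + d * W (x2 - u2 + q i) (max y2 u2) := by
      have step1 : W ((c*x1+d*x2) - (c*u1+d*u2) + q i) (max (c*y1+d*y2) (c*u1+d*u2))
          ≤ W ((c*x1+d*x2) - (c*u1+d*u2) + q i) (c * max y1 u1 + d * max y2 u2) :=
        hWmono _ _ _ hM0 hM
      have m1 : ((x1 - u1 + q i, max y1 u1) : ℝ × ℝ) ∈ {z : ℝ × ℝ | 0 ≤ z.2} :=
        le_max_of_le_left hy1
      have m2 : ((x2 - u2 + q i, max y2 u2) : ℝ × ℝ) ∈ {z : ℝ × ℝ | 0 ≤ z.2} :=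
        le_max_of_le_left hy2
      have step2 := hW.2 m1 m2 hc hd hcd
      simp only [Prod.smul_mk, Prod.mk_add_mk, smul_eq_mul] at step2
      exact step1.trans (by rw [hX]; exact step2)
    exact mul_le_mul_of_nonneg_left (by linarith) (hp i)
  have hEq : c * peakLinearStageCost a q p h W x1 y1 u1
      + d * peakLinearStageCost a q p h W x2 y2 u2
      = a * (c*u1+d*u2)
        + ∑ i, p i * (c * (h (x1 - u1 + q i) + W (x1 - u1 + q i) (max y1 u1))
             + d * (h (x2 - u2 + q i) + W (x2 - u2 + q i) (max y2 u2))) := by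
    unfold peakLinearStageCost
    have : ∑ i, p i * (c * (h (x1 - u1 + q i) + W (x1 - u1 + q i) (max y1 u1))
             + d * (h (x2 - u2 + q i) + W (x2 - u2 + q i) (max y2 u2)))
        = ∑ i, (c * (p i * (h (x1 - u1 + q i) + W (x1 - u1 + q i) (max y1 u1)))
             + d * (p i * (h (x2 - u2 + q i) + W (x2 - u2 + q i) (max y2 u2)))) :=
      Finset.sum_congr rfl (fun i _ => by ring)
    rw [this, Finset.sum_add_distrib, ← Finset.mul_sum, ← Finset.mul_sum]
    ring
  rw [hEq]
  unfold peakLinearStageCost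
  exact add_le_add_right (Finset.sum_le_sum fun i _ => key i) _

/-- Partial minimization over `u ≥ 0` of a jointly convex, nonnegative, `y`-monotone
stage cost yields a convex, nonnegative, `y`-monotone value function. -/
lemma inf_convex (F : ℝ → ℝ → ℝ → ℝ) (V : ℝ → ℝ → ℝ)
    (hnn : ∀ x y u, 0 ≤ y → 0 ≤ u → 0 ≤ F x y u)
    (hcomb : ∀ x1 x2 y1 y2 u1 u2 c d : ℝ, 0 ≤ y1 → 0 ≤ y2 → 0 ≤ u1 → 0 ≤ u2 →
      0 ≤ c → 0 ≤ d → c + d = 1 →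
      F (c*x1+d*x2) (c*y1+d*y2) (c*u1+d*u2) ≤ c * F x1 y1 u1 + d * F x2 y2 u2)
    (hmono : ∀ x y1 y2 u, 0 ≤ y1 → y1 ≤ y2 → 0 ≤ u → F x y1 u ≤ F x y2 u)
    (hV : ∀ x y, 0 ≤ y → V x y = sInf {c : ℝ | ∃ u : ℝ, 0 ≤ u ∧ c = F x y u}) :
    ConvexOn ℝ {z : ℝ × ℝ | 0 ≤ z.2} (fun z : ℝ × ℝ => V z.1 z.2) ∧
    (∀ x y, 0 ≤ y → 0 ≤ V x y) ∧
    (∀ x y1 y2, 0 ≤ y1 → y1 ≤ y2 → V x y1 ≤ V x y2) := by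
  have hSne : ∀ x y : ℝ, ({c : ℝ | ∃ u : ℝ, 0 ≤ u ∧ c = F x y u}).Nonempty :=
    fun x y => ⟨F x y 0, 0, le_rfl, rfl⟩
  have hSbdd : ∀ x y : ℝ, 0 ≤ y → BddBelow {c : ℝ | ∃ u : ℝ, 0 ≤ u ∧ c = F x y u} := by
    intro x y hy
    exact ⟨0, fun c hc => by obtain ⟨u, hu, rfl⟩ := hc; exact hnn x y u hy hu⟩
  have hnnV : ∀ x y, 0 ≤ y → 0 ≤ V x y := by
    intro x y hy
    rw [hV x y hy]
    exact le_csInf (hSne x y) (fun c hc => by obtain ⟨u, hu, rfl⟩ := hc; exact hnn x y u hy hu)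
  have hle : ∀ x y u, 0 ≤ y → 0 ≤ u → V x y ≤ F x y u := by
    intro x y u hy hu
    rw [hV x y hy]
    exact csInf_le (hSbdd x y hy) ⟨u, hu, rfl⟩
  refine ⟨⟨?_, ?_⟩, hnnV, ?_⟩
  · intro z1 h1 z2 h2 c d hc hd hcd
    simp only [Set.mem_setOf_eq] at h1 h2 ⊢
    have : (c • z1 + d • z2).2 = c * z1.2 + d * z2.2 := rfl
    rw [this]
    exact add_nonneg (mul_nonneg hc h1) (mul_nonneg hd h2)
  · rintro ⟨x1, y1⟩ h1 ⟨x2, y2⟩ h2 c d hc hd hcd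
    simp only [Set.mem_setOf_eq] at h1 h2
    simp only [Prod.smul_mk, Prod.mk_add_mk, smul_eq_mul]
    have hy : 0 ≤ c * y1 + d * y2 := add_nonneg (mul_nonneg hc h1) (mul_nonneg hd h2)
    refine le_of_forall_pos_le_add (fun ε hε => ?_)
    obtain ⟨c1, hc1S, hc1⟩ := exists_lt_of_csInf_lt (hSne x1 y1)
      (show sInf {c : ℝ | ∃ u : ℝ, 0 ≤ u ∧ c = F x1 y1 u} < V x1 y1 + ε by
        rw [hV x1 y1 h1]; linarith)
    obtain ⟨u1, hu1, rfl⟩ := hc1S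
    obtain ⟨c2, hc2S, hc2⟩ := exists_lt_of_csInf_lt (hSne x2 y2)
      (show sInf {c : ℝ | ∃ u : ℝ, 0 ≤ u ∧ c = F x2 y2 u} < V x2 y2 + ε by
        rw [hV x2 y2 h2]; linarith)
    obtain ⟨u2, hu2, rfl⟩ := hc2S
    calc V (c*x1+d*x2) (c*y1+d*y2)
        ≤ F (c*x1+d*x2) (c*y1+d*y2) (c*u1+d*u2) :=
          hle _ _ _ hy (add_nonneg (mul_nonneg hc hu1) (mul_nonneg hd hu2))
      _ ≤ c * F x1 y1 u1 + d * F x2 y2 u2 :=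
          hcomb x1 x2 y1 y2 u1 u2 c d h1 h2 hu1 hu2 hc hd hcd
      _ ≤ c * (V x1 y1 + ε) + d * (V x2 y2 + ε) :=
          add_le_add (mul_le_mul_of_nonneg_left hc1.le hc)
            (mul_le_mul_of_nonneg_left hc2.le hd)
      _ = c * V x1 y1 + d * V x2 y2 + ε := by linear_combination ε * hcd
  · intro x y1 y2 hy1 h12
    rw [hV x y2 (hy1.trans h12)]
    refine le_csInf (hSne x y2) (fun b hb => ?_)
    obtain ⟨u, hu, rfl⟩ := hb
    exact (hle x y1 u hy1 hu).trans (hmono x y1 y2 u hy1 h12 hu)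

/-- In the finite-horizon peak-pricing value recursion with zero setup cost,
`P ≥ 0`, `a_t ≥ 0` and convex nonnegative penalties, each value function `V_t` is
real-valued (the infimized set is nonempty and bounded below) and jointly convex on
`ℝ × ℝ≥0`. -/
theorem peak_value_convex
    (T : ℕ) (P : ℝ) (n : ℕ → ℕ)
    (q p : (t : ℕ) → Fin (n t) → ℝ)
    (h : ℕ → ℝ → ℝ) (a : ℕ → ℝ)
    (V : ℕ → ℝ → ℝ → ℝ)
    (hP : 0 ≤ P)
    (hq : ∀ t ∈ Finset.Icc 1 T, ∀ i, 0 ≤ q t i)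
    (hp : ∀ t ∈ Finset.Icc 1 T, ∀ i, 0 ≤ p t i)
    (hpsum : ∀ t ∈ Finset.Icc 1 T, ∑ i, p t i = 1)
    (hhconv : ∀ t ∈ Finset.Icc 1 T, ConvexOn ℝ Set.univ (h t))
    (hhpos : ∀ t ∈ Finset.Icc 1 T, ∀ x : ℝ, 0 ≤ h t x)
    (ha : ∀ t ∈ Finset.Icc 1 T, 0 ≤ a t)
    (hVterm : ∀ x y : ℝ, 0 ≤ y → V (T + 1) x y = P * y)
    (hVrec : ∀ t ∈ Finset.Icc 1 T, ∀ x y : ℝ, 0 ≤ y →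
      V t x y = sInf {c : ℝ | ∃ u : ℝ, 0 ≤ u ∧
        c = peakLinearStageCost (a t) (q t) (p t) (h t) (V (t + 1)) x y u}) :
    (∀ t ∈ Finset.Icc 1 T, ∀ x y : ℝ, 0 ≤ y →
      ({c : ℝ | ∃ u : ℝ, 0 ≤ u ∧
        c = peakLinearStageCost (a t) (q t) (p t) (h t) (V (t + 1)) x y u}.Nonempty ∧
       BddBelow {c : ℝ | ∃ u : ℝ, 0 ≤ u ∧
        c = peakLinearStageCost (a t) (q t) (p t) (h t) (V (t + 1)) x y u})) ∧
    (∀ t ∈ Finset.Icc 1 (T + 1),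
      ConvexOn ℝ {z : ℝ × ℝ | 0 ≤ z.2} (fun z : ℝ × ℝ => V t z.1 z.2)) := by
  -- base case at time T+1
  have base : ConvexOn ℝ {z : ℝ × ℝ | 0 ≤ z.2} (fun z : ℝ × ℝ => V (T+1) z.1 z.2) ∧
      (∀ x y, 0 ≤ y → 0 ≤ V (T+1) x y) ∧
      (∀ x y1 y2, 0 ≤ y1 → y1 ≤ y2 → V (T+1) x y1 ≤ V (T+1) x y2) := by
    refine ⟨⟨?_, ?_⟩, ?_, ?_⟩
    · intro z1 h1 z2 h2 c d hc hd hcd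
      simp only [Set.mem_setOf_eq] at h1 h2 ⊢
      have : (c • z1 + d • z2).2 = c * z1.2 + d * z2.2 := rfl
      rw [this]
      exact add_nonneg (mul_nonneg hc h1) (mul_nonneg hd h2)
    · rintro ⟨x1, y1⟩ h1 ⟨x2, y2⟩ h2 c d hc hd hcd
      simp only [Set.mem_setOf_eq] at h1 h2
      simp only [Prod.smul_mk, Prod.mk_add_mk, smul_eq_mul]
      rw [hVterm x1 y1 h1, hVterm x2 y2 h2,
        hVterm _ _ (add_nonneg (mul_nonneg hc h1) (mul_nonneg hd h2))]
      exact le_of_eq (by ring)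
    · intro x y hy; rw [hVterm x y hy]; exact mul_nonneg hP hy
    · intro x y1 y2 h1 h12
      rw [hVterm x y1 h1, hVterm x y2 (h1.trans h12)]
      exact mul_le_mul_of_nonneg_left h12 hP
  -- downward induction
  have good : ∀ d t : ℕ, t + d = T + 1 → 1 ≤ t →
      (ConvexOn ℝ {z : ℝ × ℝ | 0 ≤ z.2} (fun z : ℝ × ℝ => V t z.1 z.2) ∧
       (∀ x y, 0 ≤ y → 0 ≤ V t x y) ∧
       (∀ x y1 y2, 0 ≤ y1 → y1 ≤ y2 → V t x y1 ≤ V t x y2)) := by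
    intro d
    induction d with
    | zero =>
      intro t ht _
      have : t = T + 1 := by omega
      rw [this]; exact base
    | succ d ih =>
      intro t ht h1
      have htT : t ∈ Finset.Icc 1 T := Finset.mem_Icc.mpr ⟨h1, by omega⟩
      obtain ⟨ihc, ihn, ihm⟩ := ih (t+1) (by omega) (by omega)
      exact inf_convex (peakLinearStageCost (a t) (q t) (p t) (h t) (V (t+1))) (V t)
        (fun x y u hy hu =>
          peakStage_nonneg (ha t htT) (hp t htT) (hhpos t htT) ihn hy hu)
        (fun x1 x2 y1 y2 u1 u2 c d hy1 hy2 hu1 hu2 hc hd hcd =>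
          peakStage_combo (hp t htT) (hhconv t htT) ihc ihm hy1 hy2 hu1 hu2 hc hd hcd)
        (fun x y1 y2 u hy1 h12 hu =>
          peakStage_mono (hp t htT) ihm hy1 h12 hu)
        (hVrec t htT)
  constructor
  · intro t htT x y hy
    have h1 := (Finset.mem_Icc.mp htT).1
    have h2 := (Finset.mem_Icc.mp htT).2
    obtain ⟨_, ihn, _⟩ := good (T - t) (t+1) (by omega) (by omega)
    refine ⟨⟨peakLinearStageCost (a t) (q t) (p t) (h t) (V (t + 1)) x y 0, 0, le_rfl, rfl⟩, ?_⟩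
    exact ⟨0, fun c hc => by
      obtain ⟨u, hu, rfl⟩ := hc
      exact peakStage_nonneg (ha t htT) (hp t htT) (hhpos t htT) ihn hy hu⟩
  · intro t htT
    have h1 := (Finset.mem_Icc.mp htT).1
    have h2 := (Finset.mem_Icc.mp htT).2
    exact (good (T + 1 - t) t (by omega) h1).1
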